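/- In PSL(2,ℂ), the word z·x⁻¹·y·x⁻¹ equals the class of the parabolic matrix [[1, ω²], [0, 1]]. -/

import Mathlib

/-!
Setup: `PSL(2,ℂ)` as the quotient of `SL(2,ℂ)` by its center, the constants
`u = (1+√5)/2`, `ω = (1+√(-3))/2 = (1+√3·i)/2`, and the generators of the
tetrahedral groups of Neumann–Reid.
-/

noncomputable section

abbrev SL2C := Matrix.SpecialLinearGroup (Fin 2) ℂ

/-- `PSL(2,ℂ)`, the quotient of `SL(2,ℂ)` by its center `{±I}`. -/
abbrev PSL2C := SL2C ⧸ Subgroup.center SL2C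

/-- The projection `SL(2,ℂ) → PSL(2,ℂ)`, `A ↦ [A]`. -/
def pr : SL2C →* PSL2C := QuotientGroup.mk' _

def u : ℂ := ((1 + Real.sqrt 5) / 2 : ℝ)
def ω : ℂ := (1 + Real.sqrt 3 * Complex.I) / 2

lemma u_ne : u ≠ 0 := Complex.ofReal_ne_zero.mpr (by positivity)

lemma ω_ne : ω ≠ 0 := by
  unfold ω
  intro h
  rw [div_eq_zero_iff] at h
  rcases h with h | h
  · have := congrArg Complex.re h
    simp at this
  · norm_num at h

def xSL : SL2C := ⟨!![u, -u⁻¹; u, 0], by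
  rw [Matrix.det_fin_two_of]; field_simp [u_ne]; ring⟩

def ySL : SL2C := ⟨!![0, ω * u⁻¹; -ω⁻¹ * u, 0], by
  rw [Matrix.det_fin_two_of]; field_simp [u_ne, ω_ne]; ring⟩

def zSL : SL2C := ⟨!![0, ω ^ 2 * u⁻¹; -(ω ^ 2)⁻¹ * u, 0], by
  rw [Matrix.det_fin_two_of]; field_simp [u_ne, ω_ne]; ring⟩

def x : PSL2C := pr xSL
def y : PSL2C := pr ySL
def z : PSL2C := pr zSL

lemma hu_sq : u ^ 2 = u + 1 := by
  unfold u
  have h5 : (Real.sqrt 5 : ℝ) ^ 2 = 5 := Real.sq_sqrt (by norm_num)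
  push_cast
  have : ((Real.sqrt 5 : ℂ)) ^ 2 = 5 := by exact_mod_cast congrArg (Complex.ofReal ·) h5
  linear_combination (1/4 : ℂ) * this

lemma hω_sq : ω ^ 2 = ω - 1 := by
  unfold ω
  have h3 : ((Real.sqrt 3 : ℂ)) ^ 2 = 3 := by
    exact_mod_cast congrArg (Complex.ofReal ·) (Real.sq_sqrt (by norm_num : (3:ℝ) ≥ 0))
  have h : ((Real.sqrt 3 : ℂ) * Complex.I) ^ 2 = -3 := by
    rw [mul_pow, Complex.I_sq, h3]; ring
  linear_combination (1/4 : ℂ) * h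

def xInv : SL2C := ⟨!![0, u⁻¹; -u, u], by
  rw [Matrix.det_fin_two_of]; field_simp [u_ne]; ring⟩

lemma x_inv : xSL⁻¹ = xInv := by
  apply inv_eq_of_mul_eq_one_right
  ext i j
  rw [Matrix.SpecialLinearGroup.coe_mul]
  fin_cases i <;> fin_cases j <;>
    simp [xSL, xInv, Matrix.mul_apply, Fin.sum_univ_succ] <;>
    field_simp [u_ne] <;>
    ring

lemma neg_one_mem_center : (-1 : SL2C) ∈ Subgroup.center SL2C := by
  rw [Subgroup.mem_center_iff]
  intro g
  simp

/-- The word `z·x⁻¹·y·x⁻¹` is the parabolic `[[1,ω²],[0,1]]`. -/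
theorem stmt5 :
    z * x⁻¹ * y * x⁻¹ = pr ⟨!![1, ω ^ 2; 0, 1], by simp [Matrix.det_fin_two_of]⟩ := by
  unfold z x y
  rw [← map_inv, ← map_mul, ← map_mul, ← map_mul]
  unfold pr
  apply (QuotientGroup.mk'_eq_mk' _).mpr
  refine ⟨-1, neg_one_mem_center, ?_⟩
  rw [x_inv]
  ext i j
  rw [Matrix.SpecialLinearGroup.coe_mul, Matrix.SpecialLinearGroup.coe_mul, Matrix.SpecialLinearGroup.coe_mul, Matrix.SpecialLinearGroup.coe_mul]
  have hu := hu_sq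
  have hω := hω_sq
  have hune := u_ne
  have hωne := ω_ne
  fin_cases i <;> fin_cases j <;>
    simp [zSL, ySL, xInv, Matrix.mul_apply, Matrix.one_apply, Fin.sum_univ_succ] <;>
    field_simp [hune, hωne] <;>
    first
      | linear_combination (-(ω + 1)) * hω
      | linear_combination (u * ω ^ 2) * hω
      | linear_combination (-(u ^ 2) * (ω + 1)) * hω
      | linear_combination (1 + u ^ 2 * (ω + 1)) * hω
      | linear_combination hω
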